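/- Let ρ ∈ (0,1) and n ≥ 1 an integer. Every complex root λ of the polynomial p(λ) = λⁿ + ρ·Σ_{i=0}^{n-1} λⁱ satisfies |λ| < 1. -/

import Mathlib

set_option maxHeartbeats 1000000 in

theorem stmt_16 (ρ : ℝ) (hρ : 0 < ρ) (hρ1 : ρ < 1) (n : ℕ) (hn : 1 ≤ n) :
    ∀ z : ℂ, z ^ n + (ρ : ℂ) * ∑ i ∈ Finset.range n, z ^ i = 0 → ‖z‖ < 1 := by
  intro z hz
  by_contra h
  push_neg at h
  have h1 : (∑ i ∈ Finset.range n, z ^ i) * (z - 1) = z ^ n - 1 := geom_sum_mul z n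
  have key : z ^ (n + 1) = (1 - (ρ : ℂ)) * z ^ n + ρ := by
    linear_combination (z - 1) * hz - (ρ : ℂ) * h1
  have hrpos : (0:ℝ) ≤ 1 - ρ := by linarith
  have habs : ‖z‖ ^ (n + 1) ≤ (1 - ρ) * ‖z‖ ^ n + ρ := by
    calc ‖z‖ ^ (n + 1) = ‖z ^ (n + 1)‖ := by rw [norm_pow]
      _ = ‖(1 - (ρ : ℂ)) * z ^ n + ρ‖ := by rw [key]
      _ ≤ ‖(1 - (ρ : ℂ)) * z ^ n‖ + ‖(ρ : ℂ)‖ := norm_add_le _ _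
      _ = (1 - ρ) * ‖z‖ ^ n + ρ := by
          rw [norm_mul, norm_pow]
          have h2 : (1 - (ρ : ℂ)) = ((1 - ρ : ℝ) : ℂ) := by push_cast; ring
          rw [h2, Complex.norm_real, Complex.norm_real, Real.norm_eq_abs, Real.norm_eq_abs,
            abs_of_nonneg hrpos, abs_of_nonneg hρ.le]
  have hpn : 1 ≤ ‖z‖ ^ n := by
    calc (1:ℝ) = 1 ^ n := (one_pow n).symm
      _ ≤ ‖z‖ ^ n := pow_le_pow_left₀ zero_le_one h n
  have hr1 : ‖z‖ = 1 := by
    have hps : ‖z‖ ^ (n + 1) = ‖z‖ ^ n * ‖z‖ :=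
      pow_succ _ n
    have hprod : (0:ℝ) ≤ (‖z‖ ^ n - 1) * (‖z‖ - 1) :=
      mul_nonneg (by linarith) (by linarith)
    nlinarith [habs, hpn, h, hprod]
  have hwabs : ‖z ^ n‖ = 1 := by rw [norm_pow, hr1, one_pow]
  have habs2 : ‖(1 - (ρ : ℂ)) * z ^ n + ρ‖ = 1 := by
    rw [← key, norm_pow, hr1, one_pow]
  have hnsq1 : Complex.normSq (z ^ n) = 1 := by
    rw [← Complex.sq_norm, hwabs, one_pow]
  have hnsq2 : Complex.normSq ((1 - (ρ : ℂ)) * z ^ n + ρ) = 1 := by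
    rw [← Complex.sq_norm, habs2, one_pow]
  have e1 : (z ^ n).re ^ 2 + (z ^ n).im ^ 2 = 1 := by
    rw [Complex.normSq_apply] at hnsq1; nlinarith [hnsq1]
  have e2 : (1 - ρ) ^ 2 * ((z ^ n).re ^ 2 + (z ^ n).im ^ 2)
      + 2 * ρ * (1 - ρ) * (z ^ n).re + ρ ^ 2 = 1 := by
    simp only [Complex.normSq_apply, Complex.add_re, Complex.add_im, Complex.mul_re,
      Complex.mul_im, Complex.sub_re, Complex.sub_im, Complex.ofReal_re, Complex.ofReal_im,
      Complex.one_re, Complex.one_im] at hnsq2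
    nlinarith [hnsq2]
  have hre : (z ^ n).re = 1 := by
    nlinarith [e1, e2, mul_pos hρ (show (0:ℝ) < 1 - ρ by linarith)]
  have him : (z ^ n).im = 0 := by nlinarith [e1, hre]
  have hw1 : z ^ n = 1 := Complex.ext (by simp [hre]) (by simp [him])
  have hz1 : z = 1 := by
    have hk := key
    rw [pow_succ, hw1] at hk
    linear_combination hk
  rw [hz1] at hz
  simp only [one_pow, Finset.sum_const, Finset.card_range, nsmul_eq_mul, mul_one] at hz
  have hre' := congrArg Complex.re hz
  simp only [Complex.add_re, Complex.one_re, Complex.mul_re, Complex.ofReal_re,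
    Complex.ofReal_im, Complex.natCast_re, Complex.natCast_im, Complex.zero_re] at hre'
  have hn1 : (1:ℝ) ≤ (n:ℝ) := by exact_mod_cast hn
  nlinarith [hre', hρ, hn1]
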